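/- Hartogs extension for the cone: every regular function on the complement of the origin in the affine quadric cone V(ad - bc) ⊂ ℂ⁴ extends uniquely to a global regular function, hence is the restriction of a polynomial in a, b, c, d. -/

import Mathlib

open MvPolynomial

set_option linter.unnecessarySeqFocus false
set_option maxHeartbeats 1000000

/-- The affine quadric cone `V(ad - bc) ⊂ ℂ⁴`, coordinates `(a,b,c,d) = (x 0, x 1, x 2, x 3)`. -/
def quadCone : Set (Fin 4 → ℂ) := {x | x 0 * x 3 - x 1 * x 2 = 0}

lemma s8_eval_aeval {n : ℕ} (g : Fin 4 → MvPolynomial (Fin n) ℂ) (p : MvPolynomial (Fin 4) ℂ)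
    (x : Fin n → ℂ) : eval x (aeval g p) = eval (fun i => eval x (g i)) p := by
  induction p using MvPolynomial.induction_on with
  | C => simp
  | add p q hp hq => rw [map_add, map_add, hp, hq, map_add]
  | mul_X p i hp => rw [map_mul, aeval_X, map_mul, hp, map_mul, eval_X]




lemma s8_polyeval_aeval (g : Fin 4 → Polynomial ℂ) (p : MvPolynomial (Fin 4) ℂ) (x : ℂ) :
    Polynomial.eval x (aeval g p) = eval (fun i => Polynomial.eval x (g i)) p := by
  induction p using MvPolynomial.induction_on with
  | C => simp
  | add p q hp hq => rw [map_add, Polynomial.eval_add, hp, hq, map_add]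
  | mul_X p i hp => rw [map_mul, aeval_X, Polynomial.eval_mul, hp, map_mul, eval_X]

lemma s8_poly_const (p : Polynomial ℂ) (h : ∀ x : ℂ, p.eval x ≠ 0) (x y : ℂ) :
    p.eval x = p.eval y := by
  have hd : p.degree ≤ 0 := by
    by_contra hd
    have : p.degree ≠ 0 := fun h0 => hd (le_of_eq h0)
    obtain ⟨z, hz⟩ := Complex.isAlgClosed.exists_root p this
    exact h z hz
  rw [Polynomial.eq_C_of_degree_le_zero hd]
  simp

lemma s8_slice_const (q : MvPolynomial (Fin 4) ℂ) (z : Fin 4 → ℂ) (i : Fin 4)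
    (h : ∀ x : ℂ, eval (Function.update z i x) q ≠ 0) (x y : ℂ) :
    eval (Function.update z i x) q = eval (Function.update z i y) q := by
  set p := aeval (fun j => if j = i then Polynomial.X else Polynomial.C (z j)) q with hp
  have key : ∀ t : ℂ, p.eval t = eval (Function.update z i t) q := by
    intro t
    rw [hp, s8_polyeval_aeval]
    have : (fun j => Polynomial.eval t (if j = i then Polynomial.X else Polynomial.C (z j)))
        = Function.update z i t := by
      funext j
      by_cases hj : j = i <;> simp [hj, Function.update_apply]
    rw [this]
  rw [← key, ← key]
  exact s8_poly_const p (fun t => key t ▸ h t) x y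



lemma s8_upd0 (a b c d x : ℂ) : Function.update ![a,b,c,d] 0 x = ![x,b,c,d] := by
  funext j; fin_cases j <;> simp [Function.update_apply]
lemma s8_upd1 (a b c d x : ℂ) : Function.update ![a,b,c,d] 1 x = ![a,x,c,d] := by
  funext j; fin_cases j <;> simp [Function.update_apply]
lemma s8_upd2 (a b c d x : ℂ) : Function.update ![a,b,c,d] 2 x = ![a,b,x,d] := by
  funext j; fin_cases j <;> simp [Function.update_apply]
lemma s8_upd3 (a b c d x : ℂ) : Function.update ![a,b,c,d] 3 x = ![a,b,c,x] := by
  funext j; fin_cases j <;> simp [Function.update_apply]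



def s8W : Set (Fin 4 → ℂ) := {w | (w 0 ≠ 0 ∨ w 1 ≠ 0) ∧ (w 2 ≠ 0 ∨ w 3 ≠ 0)}

lemma s8_zero_of_eval {n : ℕ} (F : MvPolynomial (Fin n) ℂ) (h : ∀ z, eval z F = 0) : F = 0 :=
  MvPolynomial.funext (q := 0) (by simp [h])

lemma s8_X02_ne : (X 0 * X 2 : MvPolynomial (Fin 4) ℂ) ≠ 0 := by
  intro h0
  have := congrArg (eval (fun _ => (1:ℂ))) h0
  simp at this

lemma s8_zero_of_eval_W (F : MvPolynomial (Fin 4) ℂ) (h : ∀ w ∈ s8W, eval w F = 0) : F = 0 := by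
  have hz : F * (X 0 * X 2) = 0 := by
    apply s8_zero_of_eval
    intro z
    by_cases h0 : z 0 = 0
    · simp [h0]
    by_cases h2 : z 2 = 0
    · simp [h2]
    · simp [h z ⟨Or.inl h0, Or.inl h2⟩]
  rcases mul_eq_zero.mp hz with h | h
  · exact h
  · exact absurd h s8_X02_ne

lemma s8_const_W (q : MvPolynomial (Fin 4) ℂ) (h : ∀ w ∈ s8W, eval w q ≠ 0) :
    ∀ w, eval w q = eval ![1,0,1,0] q := by
  have step1 : ∀ s t u v : ℂ, t ≠ 0 → v ≠ 0 → eval ![s,t,u,v] q = eval ![(0:ℂ),t,0,v] q := by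
    intro s t u v ht hv
    have h1 : eval ![s,t,u,v] q = eval ![(0:ℂ),t,u,v] q := by
      have := s8_slice_const q ![0,t,u,v] 0 (fun x => by
        rw [s8_upd0]; exact h _ ⟨Or.inr ht, Or.inr hv⟩) s 0
      rwa [s8_upd0, s8_upd0] at this
    have h2 : eval ![(0:ℂ),t,u,v] q = eval ![(0:ℂ),t,0,v] q := by
      have := s8_slice_const q ![0,t,0,v] 2 (fun x => by
        rw [s8_upd2]; exact h _ ⟨Or.inr ht, Or.inr hv⟩) u 0
      rwa [s8_upd2, s8_upd2] at this
    rw [h1, h2]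
  have step2 : ∀ t v : ℂ, eval ![(1:ℂ),t,1,v] q = eval ![(1:ℂ),0,1,0] q := by
    intro t v
    have h1 : eval ![(1:ℂ),t,1,v] q = eval ![(1:ℂ),0,1,v] q := by
      have := s8_slice_const q ![1,0,1,v] 1 (fun x => by
        rw [s8_upd1]; exact h _ ⟨Or.inl one_ne_zero, Or.inl one_ne_zero⟩) t 0
      rwa [s8_upd1, s8_upd1] at this
    have h2 : eval ![(1:ℂ),0,1,v] q = eval ![(1:ℂ),0,1,0] q := by
      have := s8_slice_const q ![1,0,1,0] 3 (fun x => by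
        rw [s8_upd3]; exact h _ ⟨Or.inl one_ne_zero, Or.inl one_ne_zero⟩) v 0
      rwa [s8_upd3, s8_upd3] at this
    rw [h1, h2]
  have key : ∀ z : Fin 4 → ℂ, z 1 ≠ 0 → z 3 ≠ 0 → eval z q = eval ![(1:ℂ),0,1,0] q := by
    intro z h1 h3
    have hz : z = ![z 0, z 1, z 2, z 3] := by funext j; fin_cases j <;> rfl
    rw [hz, step1 _ _ _ _ h1 h3, ← step1 1 (z 1) 1 (z 3) h1 h3, step2]
  have hzero : q - C (eval ![(1:ℂ),0,1,0] q) = 0 := by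
    have hm : (q - C (eval ![(1:ℂ),0,1,0] q)) * (X 1 * X 3) = 0 := by
      apply s8_zero_of_eval
      intro z
      by_cases h1 : z 1 = 0
      · simp [h1]
      by_cases h3 : z 3 = 0
      · simp [h3]
      · simp [key z h1 h3]
    rcases mul_eq_zero.mp hm with hh | hh
    · exact hh
    · exfalso; have := congrArg (eval (fun _ => (1:ℂ))) hh; simp at this
  intro w
  have hw := congrArg (eval w) hzero
  rw [map_sub, map_zero, eval_C] at hw
  exact sub_eq_zero.mp hw


def s8phi (w : Fin 4 → ℂ) : Fin 4 → ℂ := ![w 0 * w 2, w 0 * w 3, w 1 * w 2, w 1 * w 3]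
noncomputable def s8phiP : Fin 4 → MvPolynomial (Fin 4) ℂ :=
  ![X 0 * X 2, X 0 * X 3, X 1 * X 2, X 1 * X 3]

lemma s8_eval_phiP (w : Fin 4 → ℂ) : (fun i => eval w (s8phiP i)) = s8phi w := by
  funext i; fin_cases i <;> simp [s8phiP, s8phi]

lemma s8_phi_mem (w : Fin 4 → ℂ) : s8phi w ∈ quadCone := by
  show s8phi w 0 * s8phi w 3 - s8phi w 1 * s8phi w 2 = 0
  simp [s8phi]; ring

lemma s8_phi_ne (w : Fin 4 → ℂ) (hw : w ∈ s8W) : s8phi w ≠ 0 := by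
  obtain ⟨h01, h23⟩ := hw
  intro h
  rcases h01 with h0 | h1 <;> rcases h23 with h2 | h3
  · have := congrFun h 0; simp [s8phi] at this; tauto
  · have := congrFun h 1; simp [s8phi] at this; tauto
  · have := congrFun h 2; simp [s8phi] at this; tauto
  · have := congrFun h 3; simp [s8phi] at this; tauto

lemma s8_phi_surj (x : Fin 4 → ℂ) (hx : x ∈ quadCone) (hx0 : x ≠ 0) :
    ∃ w ∈ s8W, s8phi w = x := by
  have hc : x 0 * x 3 - x 1 * x 2 = 0 := hx
  rw [Function.ne_iff] at hx0
  obtain ⟨i, hi⟩ := hx0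
  fin_cases i
  · have hi' : x 0 ≠ 0 := by simpa using hi
    refine ⟨![1, x 2 / x 0, x 0, x 1], ⟨Or.inl one_ne_zero, Or.inl hi'⟩, ?_⟩
    funext j; fin_cases j <;> simp [s8phi] <;> field_simp <;> linear_combination -hc
  · have hi' : x 1 ≠ 0 := by simpa using hi
    refine ⟨![1, x 3 / x 1, x 0, x 1], ⟨Or.inl one_ne_zero, Or.inr hi'⟩, ?_⟩
    funext j; fin_cases j <;> simp [s8phi] <;> field_simp <;> linear_combination hc
  · have hi' : x 2 ≠ 0 := by simpa using hi
    refine ⟨![x 0 / x 2, 1, x 2, x 3], ⟨Or.inr one_ne_zero, Or.inl hi'⟩, ?_⟩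
    funext j; fin_cases j <;> simp [s8phi] <;> field_simp <;> linear_combination hc
  · have hi' : x 3 ≠ 0 := by simpa using hi
    refine ⟨![x 1 / x 3, 1, x 2, x 3], ⟨Or.inr one_ne_zero, Or.inr hi'⟩, ?_⟩
    funext j; fin_cases j <;> simp [s8phi] <;> field_simp <;> linear_combination -hc
noncomputable def s8g1 : Fin 4 → MvPolynomial (Fin 5) ℂ := ![X 4 * X 0, X 4 * X 1, X 2, X 3]
noncomputable def s8g2 : Fin 4 → MvPolynomial (Fin 5) ℂ := ![X 0, X 1, X 4 * X 2, X 4 * X 3]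

noncomputable def s8lift1 (m : Fin 4 →₀ ℕ) : Fin 5 →₀ ℕ :=
  Finsupp.equivFunOnFinite.symm ![m 0, m 1, m 2, m 3, m 0 + m 1]
noncomputable def s8lift2 (m : Fin 4 →₀ ℕ) : Fin 5 →₀ ℕ :=
  Finsupp.equivFunOnFinite.symm ![m 0, m 1, m 2, m 3, m 2 + m 3]

lemma s8lift1_apply (m : Fin 4 →₀ ℕ) (j : Fin 5) :
    s8lift1 m j = ![m 0, m 1, m 2, m 3, m 0 + m 1] j := rfl
lemma s8lift2_apply (m : Fin 4 →₀ ℕ) (j : Fin 5) :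
    s8lift2 m j = ![m 0, m 1, m 2, m 3, m 2 + m 3] j := rfl

lemma s8_aeval_monomial1 (m : Fin 4 →₀ ℕ) (c : ℂ) :
    aeval s8g1 (monomial m c) = monomial (s8lift1 m) c := by
  rw [aeval_monomial, monomial_eq]
  rw [Finsupp.prod_fintype _ _ (fun i => pow_zero _), Finsupp.prod_fintype _ _ (fun i => pow_zero _)]
  rw [Fin.prod_univ_four, Fin.prod_univ_five]
  simp only [s8g1, s8lift1, Matrix.cons_val_zero, Matrix.cons_val_one, Matrix.head_cons,
    Matrix.cons_val_two, Matrix.tail_cons, Matrix.cons_val_three, Matrix.cons_val_four,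
    Finsupp.coe_equivFunOnFinite_symm, algebraMap_eq]
  rw [mul_pow, mul_pow, pow_add]
  ring

lemma s8_aeval_monomial2 (m : Fin 4 →₀ ℕ) (c : ℂ) :
    aeval s8g2 (monomial m c) = monomial (s8lift2 m) c := by
  rw [aeval_monomial, monomial_eq]
  rw [Finsupp.prod_fintype _ _ (fun i => pow_zero _), Finsupp.prod_fintype _ _ (fun i => pow_zero _)]
  rw [Fin.prod_univ_four, Fin.prod_univ_five]
  simp only [s8g2, s8lift2, Matrix.cons_val_zero, Matrix.cons_val_one, Matrix.head_cons,
    Matrix.cons_val_two, Matrix.tail_cons, Matrix.cons_val_three, Matrix.cons_val_four,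
    Finsupp.coe_equivFunOnFinite_symm, algebraMap_eq]
  rw [mul_pow, mul_pow, pow_add]
  ring

lemma s8lift_inj1 (m m' : Fin 4 →₀ ℕ) (h : s8lift1 m' = s8lift1 m) : m' = m := by
  ext i
  fin_cases i
  · exact DFunLike.congr_fun h 0
  · exact DFunLike.congr_fun h 1
  · exact DFunLike.congr_fun h 2
  · exact DFunLike.congr_fun h 3

lemma s8_expand1 (G : MvPolynomial (Fin 4) ℂ) :
    aeval s8g1 G = ∑ m ∈ G.support, monomial (s8lift1 m) (coeff m G) := by
  conv_lhs => rw [← G.support_sum_monomial_coeff]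
  rw [map_sum]
  exact Finset.sum_congr rfl fun m _ => s8_aeval_monomial1 m (coeff m G)

lemma s8_expand2 (G : MvPolynomial (Fin 4) ℂ) :
    aeval s8g2 G = ∑ m ∈ G.support, monomial (s8lift2 m) (coeff m G) := by
  conv_lhs => rw [← G.support_sum_monomial_coeff]
  rw [map_sum]
  exact Finset.sum_congr rfl fun m _ => s8_aeval_monomial2 m (coeff m G)

lemma s8_balanced (G : MvPolynomial (Fin 4) ℂ)
    (hinv : ∀ w w' : Fin 4 → ℂ, w ∈ s8W → w' ∈ s8W → s8phi w = s8phi w' →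
      eval w G = eval w' G) :
    ∀ m ∈ G.support, m 0 + m 1 = m 2 + m 3 := by
  have hXne : (X 0 * (X 2 * X 4) : MvPolynomial (Fin 5) ℂ) ≠ 0 := by
    intro h0
    have := congrArg (eval (fun _ => (1:ℂ))) h0
    simp at this
  have heq : aeval s8g1 G = aeval s8g2 G := by
    have hz : (aeval s8g1 G - aeval s8g2 G) * (X 0 * (X 2 * X 4)) = 0 := by
      apply s8_zero_of_eval
      intro z
      by_cases h0 : z 0 = 0
      · simp [h0]
      by_cases h2 : z 2 = 0
      · simp [h2]
      by_cases h4 : z 4 = 0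
      · simp [h4]
      have e1 : eval z (aeval s8g1 G) = eval ![z 4 * z 0, z 4 * z 1, z 2, z 3] G := by
        rw [s8_eval_aeval]
        have : (fun i => eval z (s8g1 i)) = ![z 4 * z 0, z 4 * z 1, z 2, z 3] := by
          funext i; fin_cases i <;> simp [s8g1]
        rw [this]
      have e2 : eval z (aeval s8g2 G) = eval ![z 0, z 1, z 4 * z 2, z 4 * z 3] G := by
        rw [s8_eval_aeval]
        have : (fun i => eval z (s8g2 i)) = ![z 0, z 1, z 4 * z 2, z 4 * z 3] := by
          funext i; fin_cases i <;> simp [s8g2]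
        rw [this]
      have hmem1 : (![z 4 * z 0, z 4 * z 1, z 2, z 3] : Fin 4 → ℂ) ∈ s8W := by
        refine ⟨Or.inl ?_, Or.inl ?_⟩ <;> simp [mul_ne_zero, h0, h2, h4]
      have hmem2 : (![z 0, z 1, z 4 * z 2, z 4 * z 3] : Fin 4 → ℂ) ∈ s8W := by
        refine ⟨Or.inl ?_, Or.inl ?_⟩ <;> simp [mul_ne_zero, h0, h2, h4]
      have hphi : s8phi ![z 4 * z 0, z 4 * z 1, z 2, z 3]
          = s8phi ![z 0, z 1, z 4 * z 2, z 4 * z 3] := by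
        funext j; fin_cases j <;> (simp [s8phi]; ring)
      rw [map_mul, map_sub, e1, e2, hinv _ _ hmem1 hmem2 hphi, sub_self, zero_mul]
    rcases mul_eq_zero.mp hz with hh | hh
    · exact sub_eq_zero.mp hh
    · exact absurd hh hXne
  intro m hm
  by_contra hne
  have e1 : coeff (s8lift1 m) (aeval s8g1 G) = coeff m G := by
    rw [s8_expand1, MvPolynomial.coeff_sum]
    rw [Finset.sum_eq_single m]
    · rw [coeff_monomial, if_pos rfl]
    · intro m' _ hne'
      rw [coeff_monomial, if_neg]
      intro h
      exact hne' (s8lift_inj1 m m' h)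
    · intro h
      exact absurd hm h
  have e2 : coeff (s8lift1 m) (aeval s8g2 G) = 0 := by
    rw [s8_expand2, MvPolynomial.coeff_sum]
    apply Finset.sum_eq_zero
    intro m' _
    rw [coeff_monomial, if_neg]
    intro h
    have c0 : m' 0 = m 0 := by simpa [s8lift1, s8lift2] using DFunLike.congr_fun h 0
    have c1 : m' 1 = m 1 := by simpa [s8lift1, s8lift2] using DFunLike.congr_fun h 1
    have c2 : m' 2 = m 2 := by simpa [s8lift1, s8lift2] using DFunLike.congr_fun h 2
    have c3 : m' 3 = m 3 := by simpa [s8lift1, s8lift2] using DFunLike.congr_fun h 3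
    have c4 : m' 2 + m' 3 = m 0 + m 1 := by
      simpa [s8lift1, s8lift2] using DFunLike.congr_fun h 4
    exact hne (by omega)
  rw [heq, e2] at e1
  exact (mem_support_iff.mp hm) e1.symm

noncomputable def s8E (m : Fin 4 →₀ ℕ) : Fin 4 →₀ ℕ :=
  Finsupp.equivFunOnFinite.symm
    ![min (m 0) (m 2), m 0 - min (m 0) (m 2), m 2 - min (m 0) (m 2),
      m 1 - (m 2 - min (m 0) (m 2))]

lemma s8_descend (G : MvPolynomial (Fin 4) ℂ)
    (hbal : ∀ m ∈ G.support, m 0 + m 1 = m 2 + m 3) :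
    ∃ P : MvPolynomial (Fin 4) ℂ, ∀ w : Fin 4 → ℂ, eval (s8phi w) P = eval w G := by
  refine ⟨∑ m ∈ G.support, monomial (s8E m) (coeff m G), fun w => ?_⟩
  rw [map_sum, eval_eq' w G]
  apply Finset.sum_congr rfl
  intro m hm
  rw [eval_monomial, Finsupp.prod_fintype _ _ (fun i => pow_zero _), Fin.prod_univ_four,
    Fin.prod_univ_four]
  have hb := hbal m hm
  simp only [s8E, s8phi, Finsupp.coe_equivFunOnFinite_symm, Matrix.cons_val_zero,
    Matrix.cons_val_one, Matrix.head_cons, Matrix.cons_val_two, Matrix.tail_cons,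
    Matrix.cons_val_three]
  set e0 := min (m 0) (m 2) with he0
  have h0 : e0 + (m 0 - e0) = m 0 := by omega
  have h2 : e0 + (m 2 - e0) = m 2 := by omega
  have h1 : (m 2 - e0) + (m 1 - (m 2 - e0)) = m 1 := by omega
  have h3 : (m 0 - e0) + (m 1 - (m 2 - e0)) = m 3 := by omega
  have main : coeff m G * ((w 0 * w 2) ^ e0 * (w 0 * w 3) ^ (m 0 - e0) *
        (w 1 * w 2) ^ (m 2 - e0) * (w 1 * w 3) ^ (m 1 - (m 2 - e0)))
      = coeff m G * (w 0 ^ (e0 + (m 0 - e0)) * w 1 ^ ((m 2 - e0) + (m 1 - (m 2 - e0))) *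
        w 2 ^ (e0 + (m 2 - e0)) * w 3 ^ ((m 0 - e0) + (m 1 - (m 2 - e0)))) := by
        rw [pow_add, pow_add, pow_add, pow_add]; ring
  rw [h0, h1, h2, h3] at main
  exact main

/-- Hartogs extension for the cone: if `f` is a regular function
on the complement of the origin in the cone `V(ad - bc)` — i.e. near every
point of the punctured cone it agrees with a ratio `p/q` of polynomials with
nonvanishing denominator — then `f` is the restriction of a polynomial `P` in
`a,b,c,d`, and the extension is unique (any two polynomials restricting to `f`
on the punctured cone agree on the whole cone). -/
theorem stmt_8 (f : (Fin 4 → ℂ) → ℂ)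
    (hreg : ∀ x ∈ quadCone, x ≠ 0 →
      ∃ p q : MvPolynomial (Fin 4) ℂ, eval x q ≠ 0 ∧
        ∀ y ∈ quadCone, y ≠ 0 → eval y q ≠ 0 → f y * eval y q = eval y p) :
    ∃ P : MvPolynomial (Fin 4) ℂ,
      (∀ x ∈ quadCone, x ≠ 0 → f x = eval x P) ∧
      ∀ Q : MvPolynomial (Fin 4) ℂ,
        (∀ x ∈ quadCone, x ≠ 0 → f x = eval x Q) →
        ∀ x ∈ quadCone, eval x P = eval x Q := by
  classical
  have hfrac : ∀ w ∈ s8W, ∃ pq : MvPolynomial (Fin 4) ℂ × MvPolynomial (Fin 4) ℂ,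
      eval w pq.2 ≠ 0 ∧
      ∀ w' ∈ s8W, eval w' pq.2 ≠ 0 → f (s8phi w') * eval w' pq.2 = eval w' pq.1 := by
    intro w hw
    obtain ⟨p, q, hq, hpq⟩ := hreg (s8phi w) (s8_phi_mem w) (s8_phi_ne w hw)
    refine ⟨(aeval s8phiP p, aeval s8phiP q), ?_, ?_⟩
    · rw [s8_eval_aeval, s8_eval_phiP]; exact hq
    · intro w' hw' hq'
      rw [s8_eval_aeval, s8_eval_phiP] at hq' ⊢
      rw [s8_eval_aeval, s8_eval_phiP]
      exact hpq (s8phi w') (s8_phi_mem w') (s8_phi_ne w' hw') hq'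
  choose F hF1 hF2 using hfrac
  have hw₀ : (![1,0,1,0] : Fin 4 → ℂ) ∈ s8W := by
    refine ⟨Or.inl ?_, Or.inl ?_⟩ <;> simp
  set w₀ : Fin 4 → ℂ := ![1,0,1,0] with hw₀def
  have hcompat : ∀ w (hw : w ∈ s8W) w' (hw' : w' ∈ s8W),
      (F w hw).1 * (F w' hw').2 = (F w' hw').1 * (F w hw).2 := by
    intro w hw w' hw'
    have hq1 : (F w hw).2 ≠ 0 := fun h => hF1 w hw (by rw [h, map_zero])
    have hq2 : (F w' hw').2 ≠ 0 := fun h => hF1 w' hw' (by rw [h, map_zero])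
    have hz : ((F w hw).1 * (F w' hw').2 - (F w' hw').1 * (F w hw).2)
        * ((F w hw).2 * (F w' hw').2) = 0 := by
      apply s8_zero_of_eval_W
      intro z hzW
      rw [map_mul, map_sub, map_mul, map_mul, map_mul]
      by_cases e1 : eval z (F w hw).2 = 0
      · rw [e1]; ring
      by_cases e2 : eval z (F w' hw').2 = 0
      · rw [e2]; ring
      have A := hF2 w hw z hzW e1
      have B := hF2 w' hw' z hzW e2
      linear_combination
        (eval z (F w hw).2 * (eval z (F w hw).2 * eval z (F w' hw').2)) * B
        - (eval z (F w' hw').2 * (eval z (F w hw).2 * eval z (F w' hw').2)) * A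
    rcases mul_eq_zero.mp hz with hh | hh
    · exact sub_eq_zero.mp hh
    · rcases mul_eq_zero.mp hh with h | h
      · exact absurd h hq1
      · exact absurd h hq2
  obtain ⟨q₀, p₀, c, hrel, hcq, hcp⟩ :=
    UniqueFactorizationMonoid.exists_reduced_factors (F w₀ hw₀).2
      (fun h => hF1 w₀ hw₀ (by rw [h, map_zero])) (F w₀ hw₀).1
  have hc : c ≠ 0 := by
    intro h
    exact hF1 w₀ hw₀ (by rw [← hcq, h, zero_mul, map_zero])
  have key : ∀ w (hw : w ∈ s8W), (F w hw).1 * q₀ = p₀ * (F w hw).2 := by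
    intro w hw
    apply mul_left_cancel₀ hc
    have h1 : (F w hw).1 * (F w₀ hw₀).2 = (F w₀ hw₀).1 * (F w hw).2 := hcompat w hw w₀ hw₀
    rw [← hcq, ← hcp] at h1
    linear_combination h1
  have hdvd : ∀ w (hw : w ∈ s8W), q₀ ∣ (F w hw).2 := by
    intro w hw
    exact hrel.dvd_of_dvd_mul_left ⟨(F w hw).1, by linear_combination -(key w hw)⟩
  have hq₀W : ∀ w ∈ s8W, eval w q₀ ≠ 0 := by
    intro w hw h0
    obtain ⟨e, he⟩ := hdvd w hw
    exact hF1 w hw (by rw [he, map_mul, h0, zero_mul])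
  have hkconst := s8_const_W q₀ hq₀W
  set k := eval ![1,0,1,0] q₀ with hk
  have hk0 : k ≠ 0 := by
    have := hq₀W w₀ hw₀
    rwa [hkconst w₀] at this
  set G := C k⁻¹ * p₀ with hGdef
  have hGval : ∀ w ∈ s8W, eval w G = f (s8phi w) := by
    intro w hw
    have A := hF2 w hw w hw (hF1 w hw)
    have B := congrArg (eval w) (key w hw)
    rw [map_mul, map_mul, hkconst w] at B
    have hF2ne := hF1 w hw
    have C1 : eval w p₀ = f (s8phi w) * k := by
      apply mul_right_cancel₀ hF2ne
      linear_combination -B - k * A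
    rw [hGdef, map_mul, eval_C, C1]
    field_simp
  have hbal := s8_balanced G (fun w w' hw hw' hphi => by
    rw [hGval w hw, hGval w' hw', hphi])
  obtain ⟨P, hP⟩ := s8_descend G hbal
  have hP' : ∀ y ∈ quadCone, y ≠ 0 → f y = eval y P := by
    intro y hy hy0
    obtain ⟨w, hw, rfl⟩ := s8_phi_surj y hy hy0
    rw [hP w, hGval w hw]
  refine ⟨P, hP', ?_⟩
  intro Q hQ x hx
  have hsub : ∀ y ∈ quadCone, y ≠ 0 → eval y (P - Q) = 0 := by
    intro y hy hy0
    rw [map_sub, ← hP' y hy hy0, ← hQ y hy hy0, sub_self]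
  by_cases hx0 : x = 0
  · subst hx0
    set r := aeval (fun j : Fin 4 => if j = 0 then Polynomial.X else (0 : Polynomial ℂ)) (P - Q) with hr
    have hrval : ∀ t : ℂ, r.eval t = eval (fun j : Fin 4 => if j = 0 then t else 0) (P - Q) := by
      intro t
      rw [hr, s8_polyeval_aeval]
      have hfn : (fun j : Fin 4 =>
          Polynomial.eval t ((fun j : Fin 4 => if j = 0 then Polynomial.X else (0 : Polynomial ℂ)) j))
          = fun j : Fin 4 => if j = 0 then t else 0 := by
        funext j
        by_cases hj : j = 0 <;> simp [hj]
      rw [hfn]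
    have hr0 : ∀ t : ℂ, t ≠ 0 → r.eval t = 0 := by
      intro t ht
      rw [hrval]
      apply hsub
      · show (fun j : Fin 4 => if j = 0 then t else 0) ∈ quadCone
        show (if (0:Fin 4) = 0 then t else 0) * (if (3:Fin 4) = 0 then t else 0)
          - (if (1:Fin 4) = 0 then t else 0) * (if (2:Fin 4) = 0 then t else 0) = 0
        rw [if_pos rfl, if_neg (by decide), if_neg (by decide), if_neg (by decide)]
        ring
      · intro h
        have := congrFun h 0
        simp at this
        exact ht this
    have hrX : r * Polynomial.X = 0 := by
      apply Polynomial.funext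
      intro t
      by_cases ht : t = 0
      · simp [ht]
      · simp [hr0 t ht]
    have hrz : r = 0 := by
      rcases mul_eq_zero.mp hrX with h | h
      · exact h
      · exact absurd h Polynomial.X_ne_zero
    have h0 := hrval 0
    rw [hrz] at h0
    have hfun : (fun j : Fin 4 => if j = 0 then (0:ℂ) else 0) = (0 : Fin 4 → ℂ) := by
      funext j
      simp
    rw [hfun] at h0
    simp only [Polynomial.eval_zero] at h0
    have := h0.symm
    rw [map_sub, sub_eq_zero] at this
    exact this
  · have := hsub x hx hx0
    rw [map_sub, sub_eq_zero] at this
    exact this
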